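/- Discarding m qubits lowers −ln A_3 by at most m·ln 2: let ρ be an (n+m)-qubit state and let tr_m(ρ) denote the n-qubit state obtained by tracing out the last m qubits. Then A_3(tr_m(ρ)) ≤ 2^m · A_3(ρ), equivalently −ln A_3(tr_m(ρ)) ≥ −ln A_3(ρ) − m·ln 2. -/

import Mathlib

open Matrix Complex BigOperators
open scoped ComplexOrder

noncomputable section

/-- Index type for `n` qubits: functions `Fin n → Fin 2` (cardinality `2^n`). -/
abbrev QIdx (n : ℕ) := Fin n → Fin 2

/-- The four single-qubit Pauli matrices: `σ⁰ = I`, `σ¹ = σˣ`, `σ² = σᶻ`, `σ³ = σʸ`. -/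
def pauliMat : Fin 4 → Matrix (Fin 2) (Fin 2) ℂ
  | 0 => 1
  | 1 => !![0, 1; 1, 0]
  | 2 => !![1, 0; 0, -1]
  | 3 => !![0, -Complex.I; Complex.I, 0]

/-- The Pauli string `σ^{a_1} ⊗ ⋯ ⊗ σ^{a_n}` as a `2^n × 2^n` matrix. -/
def pauliString {n : ℕ} (a : Fin n → Fin 4) : Matrix (QIdx n) (QIdx n) ℂ :=
  fun i j => ∏ k, pauliMat (a k) (i k) (j k)

/-- An `n`-qubit state: positive semidefinite with unit trace. -/
def IsState {n : ℕ} (ρ : Matrix (QIdx n) (QIdx n) ℂ) : Prop :=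
  ρ.PosSemidef ∧ ρ.trace = 1

/-- The `α`-moment of the Pauli spectrum `A_α(ρ) = 2^{-n} ∑_P |tr(ρP)|^{2α}`. -/
def Amom {n : ℕ} (α : ℝ) (ρ : Matrix (QIdx n) (QIdx n) ℂ) : ℝ :=
  ((2:ℝ)^n)⁻¹ * ∑ a : Fin n → Fin 4, (‖(ρ * pauliString a).trace‖) ^ (2 * α)

/-- The 2-Rényi entropy `S₂(ρ) = -ln tr(ρ²)`. -/
def S2 {n : ℕ} (ρ : Matrix (QIdx n) (QIdx n) ℂ) : ℝ :=
  - Real.log ((ρ * ρ).trace.re)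

/-- The magic witness `W_α(ρ) = (1/(1-α)) ln A_α(ρ) - ((1-2α)/(1-α)) S₂(ρ)`. -/
def Wit {n : ℕ} (α : ℝ) (ρ : Matrix (QIdx n) (QIdx n) ℂ) : ℝ :=
  (1 / (1 - α)) * Real.log (Amom α ρ) - ((1 - 2*α)/(1 - α)) * S2 ρ

/-- The stabilizer norm `D(ρ) = A_{1/2}(ρ) = 2^{-n} ∑_P |tr(ρP)|`. -/
def Dnorm {n : ℕ} (ρ : Matrix (QIdx n) (QIdx n) ℂ) : ℝ :=
  Amom (1/2) ρ

/-- A Clifford unitary: unitary mapping every Pauli string to `±` a Pauli string. -/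
def IsCliffordUnitary {n : ℕ} (U : Matrix (QIdx n) (QIdx n) ℂ) : Prop :=
  U ∈ Matrix.unitaryGroup (QIdx n) ℂ ∧
    ∀ a : Fin n → Fin 4, ∃ (b : Fin n → Fin 4) (ε : ℝ),
      (ε = 1 ∨ ε = -1) ∧ U * pauliString a * Uᴴ = (ε : ℂ) • pauliString b

/-- The computational all-zeros basis vector `|0⟩^{⊗n}`. -/
def zeroVec (n : ℕ) : QIdx n → ℂ :=
  fun i => if (∀ k, i k = 0) then 1 else 0

/-- A pure stabilizer state vector: `U|0⟩^{⊗n}` for a Clifford unitary `U`. -/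
def IsPureStab {n : ℕ} (ψ : QIdx n → ℂ) : Prop :=
  ∃ U, IsCliffordUnitary U ∧ ψ = U.mulVec (zeroVec n)

/-- The rank-one projector `|ψ⟩⟨ψ|`. -/
def proj {n : ℕ} (ψ : QIdx n → ℂ) : Matrix (QIdx n) (QIdx n) ℂ :=
  Matrix.vecMulVec ψ (star ψ)

/-- A mixed stabilizer state: a finite convex combination of pure stabilizer projectors. -/
def IsMixedStab {n : ℕ} (ρ : Matrix (QIdx n) (QIdx n) ℂ) : Prop :=
  ∃ (k : ℕ) (p : Fin k → ℝ) (ψ : Fin k → QIdx n → ℂ),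
    (∀ i, 0 ≤ p i) ∧ (∑ i, p i = 1) ∧ (∀ i, IsPureStab (ψ i)) ∧
    ρ = ∑ i, (p i : ℂ) • proj (ψ i)

/-- The set of values `ln ∑ᵢ |xᵢ|` over finite real stabilizer decompositions of `ρ`. -/
def StabDecomps {n : ℕ} (ρ : Matrix (QIdx n) (QIdx n) ℂ) : Set ℝ :=
  { r | ∃ (k : ℕ) (x : Fin k → ℝ) (ψ : Fin k → QIdx n → ℂ),
      (∀ i, IsPureStab (ψ i)) ∧ ρ = ∑ i, (x i : ℂ) • proj (ψ i) ∧
      r = Real.log (∑ i, |x i|) }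

/-- The log-free robustness of magic. -/
def LR {n : ℕ} (ρ : Matrix (QIdx n) (QIdx n) ℂ) : ℝ := sInf (StabDecomps ρ)

open Classical in
/-- Positive-semidefinite square root (junk value `0` off the PSD cone). -/
def psdSqrt {n : ℕ} (A : Matrix (QIdx n) (QIdx n) ℂ) : Matrix (QIdx n) (QIdx n) ℂ :=
  if h : A.PosSemidef then
    h.1.eigenvectorUnitary.1 * diagonal ((↑) ∘ Real.sqrt ∘ h.1.eigenvalues) *
      (star h.1.eigenvectorUnitary : Matrix (QIdx n) (QIdx n) ℂ) else 0

/-- The Uhlmann fidelity `F(ρ,σ) = (tr √(√ρ σ √ρ))²`. -/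
def fidelity {n : ℕ} (ρ σ : Matrix (QIdx n) (QIdx n) ℂ) : ℝ :=
  ((psdSqrt (psdSqrt ρ * σ * psdSqrt ρ)).trace.re) ^ 2

/-- The stabilizer fidelity `D_F(ρ) = inf { -ln F(ρ,σ) : σ a mixed stabilizer state }`. -/
def DF {n : ℕ} (ρ : Matrix (QIdx n) (QIdx n) ℂ) : ℝ :=
  sInf { r | ∃ σ, IsMixedStab σ ∧ r = - Real.log (fidelity ρ σ) }

/-- Filtered Pauli moment `Ã_α(ρ) = (2^n A_α(ρ) - 1)/(2^n - 1)`. -/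
def Atil {n : ℕ} (α : ℝ) (ρ : Matrix (QIdx n) (QIdx n) ℂ) : ℝ :=
  ((2:ℝ)^n * Amom α ρ - 1) / ((2:ℝ)^n - 1)

/-- Filtered stabilizer norm `D̃(ρ) = (2^n D(ρ) - 1)/(2^n - 1)`. -/
def Dtil {n : ℕ} (ρ : Matrix (QIdx n) (QIdx n) ℂ) : ℝ :=
  ((2:ℝ)^n * Dnorm ρ - 1) / ((2:ℝ)^n - 1)

/-- Filtered magic witness `W̃_α(ρ) = (1/(1-α)) ln Ã_α(ρ) + ((1-2α)/(1-α)) ln Ã₁(ρ)`. -/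
def Wtil {n : ℕ} (α : ℝ) (ρ : Matrix (QIdx n) (QIdx n) ℂ) : ℝ :=
  (1/(1-α)) * Real.log (Atil α ρ) + ((1 - 2*α)/(1-α)) * Real.log (Atil 1 ρ)

/-- The maximally mixed state `I/2^n`. -/
def maxMixed (n : ℕ) : Matrix (QIdx n) (QIdx n) ℂ := ((2:ℂ)^n)⁻¹ • 1

/-- The single-qubit T-state vector `|T⟩ = (|0⟩ + e^{-iπ/4}|1⟩)/√2`. -/
def Tket : QIdx 1 → ℂ :=
  fun i => if i 0 = 0 then (Real.sqrt 2 : ℂ)⁻¹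
           else Complex.exp (-(Real.pi/4 : ℂ) * Complex.I) * (Real.sqrt 2 : ℂ)⁻¹

/-- The depolarized T-state `ρ_p = (1-p)|T⟩⟨T| + p·I₂/2`. -/
def rhoDep (p : ℝ) : Matrix (QIdx 1) (QIdx 1) ℂ :=
  ((1 - p : ℝ) : ℂ) • proj Tket + ((p : ℝ) : ℂ) • (((2:ℂ))⁻¹ • 1)


/-- Partial trace over the last `m` qubits of an `(n+m)`-qubit matrix. -/
def ptraceLast {n m : ℕ} (ρ : Matrix (QIdx (n+m)) (QIdx (n+m)) ℂ) :
    Matrix (QIdx n) (QIdx n) ℂ :=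
  fun i j => ∑ k : QIdx m,
    ρ (fun t => Fin.addCases (motive := fun _ => Fin 2) i k t)
      (fun t => Fin.addCases (motive := fun _ => Fin 2) j k t)


/-- Concatenation of qubit indices. -/
def qpair {n m : ℕ} (i : QIdx n) (k : QIdx m) : QIdx (n+m) :=
  fun t => Fin.addCases (motive := fun _ => Fin 2) i k t

/-- Splitting equivalence `QIdx n × QIdx m ≃ QIdx (n+m)`. -/
def qSplit {n m : ℕ} : (QIdx n × QIdx m) ≃ QIdx (n+m) where
  toFun p := qpair p.1 p.2
  invFun f := (fun i => f (Fin.castAdd m i), fun k => f (Fin.natAdd n k))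
  left_inv p := by
    ext t
    · simp [qpair]
    · simp [qpair]
  right_inv f := by
    funext t
    refine Fin.addCases (fun i => ?_) (fun k => ?_) t
    · simp [qpair]
    · simp [qpair]

/-- Extend a Pauli index by identities on the last `m` qubits. -/
def extZ {n m : ℕ} (a : Fin n → Fin 4) : Fin (n+m) → Fin 4 :=
  fun t => Fin.addCases (motive := fun _ => Fin 4) a (fun _ => 0) t

lemma extZ_injective {n m : ℕ} : Function.Injective (extZ (n := n) (m := m)) := by
  intro a b h
  funext t
  have := congrFun h (Fin.castAdd m t)
  simpa [extZ] using this

lemma pauliString_extZ {n m : ℕ} (a : Fin n → Fin 4) (i j : QIdx n) (k l : QIdx m) :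
    pauliString (extZ (m := m) a) (qpair i k) (qpair j l)
      = pauliString a i j * (if l = k then 1 else 0) := by
  unfold pauliString extZ qpair
  rw [Fin.prod_univ_add]
  congr 1
  · exact Finset.prod_congr rfl fun t _ => by simp
  · simp only [Fin.addCases_right]
    by_cases hkl : l = k
    · subst hkl; simp [pauliMat, Matrix.one_apply]
    · obtain ⟨t, ht⟩ := Function.ne_iff.mp hkl
      rw [if_neg hkl]
      refine Finset.prod_eq_zero (Finset.mem_univ t) ?_
      simp [pauliMat, Matrix.one_apply, (Ne.symm ht)]

lemma trace_ptrace_pauli {n m : ℕ} (ρ : Matrix (QIdx (n+m)) (QIdx (n+m)) ℂ)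
    (a : Fin n → Fin 4) :
    (ptraceLast ρ * pauliString a).trace = (ρ * pauliString (extZ a)).trace := by
  have h1 : ∀ f : QIdx (n+m) → ℂ, ∑ I, f I = ∑ p : QIdx n × QIdx m, f (qSplit p) :=
    fun f => (Equiv.sum_comp qSplit f).symm
  simp only [Matrix.trace, Matrix.diag, Matrix.mul_apply]
  simp only [h1, qSplit, Equiv.coe_fn_mk, Fintype.sum_prod_type, pauliString_extZ,
    ← mul_assoc, mul_ite, mul_one, mul_zero]
  simp only [Finset.sum_ite_eq, Finset.sum_ite_eq', Finset.mem_univ, if_true]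
  simp only [ptraceLast, Finset.sum_mul]
  refine Finset.sum_congr rfl fun i _ => ?_
  rw [Finset.sum_comm]
  rfl

lemma pauliString_zero {n : ℕ} : pauliString (fun _ : Fin n => (0 : Fin 4)) = 1 := by
  funext i j
  have h : ∀ t : Fin n, pauliMat 0 (i t) (j t) = if i t = j t then 1 else 0 := by
    intro t; simp [pauliMat, Matrix.one_apply]
  simp only [pauliString, h, Matrix.one_apply]
  by_cases hij : i = j
  · subst hij; simp
  · obtain ⟨t, ht⟩ := Function.ne_iff.mp hij
    rw [if_neg hij]
    exact Finset.prod_eq_zero (Finset.mem_univ t) (if_neg ht)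

lemma Amom3_pos_of_trace_one {n : ℕ} (σ : Matrix (QIdx n) (QIdx n) ℂ) (h : σ.trace = 1) :
    0 < Amom 3 σ := by
  have hterm : (‖(σ * pauliString (fun _ : Fin n => 0)).trace‖) ^ (2 * (3:ℝ)) = 1 := by
    rw [pauliString_zero, Matrix.mul_one, h]
    simp
  have hsum : (1:ℝ) ≤ ∑ a : Fin n → Fin 4,
      (‖(σ * pauliString a).trace‖) ^ (2 * (3:ℝ)) := by
    rw [← hterm]
    exact Finset.single_le_sum
      (f := fun a : Fin n → Fin 4 => (‖(σ * pauliString a).trace‖) ^ (2 * (3:ℝ)))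
      (fun a _ => Real.rpow_nonneg (norm_nonneg _) _) (Finset.mem_univ _)
  have hpos : (0:ℝ) < ((2:ℝ)^n)⁻¹ := by positivity
  have := mul_le_mul_of_nonneg_left hsum (le_of_lt hpos)
  unfold Amom
  nlinarith

lemma ptraceLast_trace {n m : ℕ} (ρ : Matrix (QIdx (n+m)) (QIdx (n+m)) ℂ) :
    (ptraceLast ρ).trace = ρ.trace := by
  have h1 : ∀ f : QIdx (n+m) → ℂ, ∑ I, f I = ∑ p : QIdx n × QIdx m, f (qSplit p) :=
    fun f => (Equiv.sum_comp qSplit f).symm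
  simp only [Matrix.trace, Matrix.diag, ptraceLast, h1, qSplit, Equiv.coe_fn_mk,
    Fintype.sum_prod_type, qpair]
  rfl

/-- discarding `m` qubits lowers `-ln A₃` by at most `m ln 2`:
`A₃(tr_m ρ) ≤ 2^m A₃(ρ)`, equivalently
`-ln A₃(tr_m ρ) ≥ -ln A₃(ρ) - m ln 2`. -/
theorem ptrace_A3_bound {n m : ℕ} (ρ : Matrix (QIdx (n+m)) (QIdx (n+m)) ℂ)
    (hρ : IsState ρ) :
    Amom 3 (ptraceLast ρ) ≤ (2:ℝ)^m * Amom 3 ρ ∧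
    - Real.log (Amom 3 (ptraceLast ρ)) ≥ - Real.log (Amom 3 ρ) - m * Real.log 2 := by
  obtain ⟨hpsd, htr⟩ := hρ
  set g : (Fin (n+m) → Fin 4) → ℝ :=
    fun b => (‖(ρ * pauliString b).trace‖) ^ (2 * (3:ℝ)) with hg
  have key : Amom 3 (ptraceLast ρ) ≤ (2:ℝ)^m * Amom 3 ρ := by
    have hre : ∑ a : Fin n → Fin 4,
        (‖(ptraceLast ρ * pauliString a).trace‖) ^ (2 * (3:ℝ))
        = ∑ a : Fin n → Fin 4, g (extZ a) :=
      Finset.sum_congr rfl fun a _ => by rw [trace_ptrace_pauli]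
    have h2 : ∑ a : Fin n → Fin 4, g (extZ a) ≤ ∑ b : Fin (n+m) → Fin 4, g b := by
      calc ∑ a : Fin n → Fin 4, g (extZ a)
          = ∑ b ∈ Finset.univ.image extZ, g b :=
            (Finset.sum_image (fun a _ b _ h => extZ_injective h)).symm
        _ ≤ ∑ b : Fin (n+m) → Fin 4, g b :=
            Finset.sum_le_sum_of_subset_of_nonneg (Finset.subset_univ _)
              (fun b _ _ => Real.rpow_nonneg (norm_nonneg _) _)
    have hc : (2:ℝ)^m * ((2:ℝ)^(n+m))⁻¹ = ((2:ℝ)^n)⁻¹ := by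
      rw [pow_add]
      field_simp
    unfold Amom
    rw [hre, ← mul_assoc, hc]
    exact mul_le_mul_of_nonneg_left h2 (by positivity)
  have hpos1 : 0 < Amom 3 (ptraceLast ρ) :=
    Amom3_pos_of_trace_one _ (by rw [ptraceLast_trace, htr])
  have hpos2 : 0 < Amom 3 ρ := Amom3_pos_of_trace_one _ htr
  refine ⟨key, ?_⟩
  have hlog := Real.log_le_log hpos1 key
  rw [Real.log_mul (by positivity) (ne_of_gt hpos2), Real.log_pow] at hlog
  linarith


end
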